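/- For every pre-diagram λ = (λ_1, …, λ_r): (1) at most one move R_j is applicable to λ; and (2) every sequence λ = λ(0), λ(1), λ(2), … in which each λ(s+1) is obtained from λ(s) by an applicable move is finite (the wrapping process terminates). -/

import Mathlib

/-- A pre-diagram: a finite sequence of nonnegative integers whose last entry is nonzero
and which has at most one ascent (index `i` with `λ_{i+1} > λ_i`). -/
def IsPreDiagram (l : List ℕ) : Prop :=
  (∀ h : l ≠ [], l.getLast h ≠ 0) ∧
    (List.range (l.length - 1)).countP
      (fun i => decide (l.getD i 0 < l.getD (i + 1) 0)) ≤ 1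

/-- The move `R_j` (0-indexed: acting on positions `j, j+1`) is applicable. -/
def MoveApplicable (l : List ℕ) (j : ℕ) : Prop :=
  j + 1 < l.length ∧ l.getD j 0 + 2 ≤ l.getD (j + 1) 0

/-- The result of applying the move `R_j`: the pair `(λ_j, λ_{j+1})` is replaced by
`(λ_{j+1} - 1, λ_j + 1)`. -/
def applyMove (l : List ℕ) (j : ℕ) : List ℕ :=
  (l.set j (l.getD (j + 1) 0 - 1)).set (j + 1) (l.getD j 0 + 1)

/-- `l'` is obtained from `l` by one applicable move. -/
def MoveRel (l l' : List ℕ) : Prop := ∃ j, MoveApplicable l j ∧ l' = applyMove l j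

lemma getD_set' (l : List ℕ) (k i v : ℕ) :
    (l.set k v).getD i 0 = if k = i ∧ k < l.length then v else l.getD i 0 := by
  rw [List.getD_eq_getElem?_getD, List.getD_eq_getElem?_getD, List.getElem?_set]
  by_cases h1 : k = i
  · subst h1
    by_cases h2 : k < l.length
    · simp [h2]
    · simp [h2, List.getElem?_eq_none (Nat.le_of_not_lt h2)]
  · simp [h1]

/-- The moment measure: `∑ i * l_i`. -/
def moment (l : List ℕ) : ℕ := ∑ i ∈ Finset.range l.length, i * l.getD i 0

lemma moment_decreases {l l' : List ℕ} (h : MoveRel l l') : moment l' < moment l := by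
  obtain ⟨j, ⟨hj, hab⟩, rfl⟩ := h
  have hjl : j < l.length := by omega
  have hlen : (applyMove l j).length = l.length := by
    simp [applyMove]
  have hget : ∀ i, (applyMove l j).getD i 0 =
      if i = j + 1 then l.getD j 0 + 1 else if i = j then l.getD (j + 1) 0 - 1
      else l.getD i 0 := by
    intro i
    simp only [applyMove, getD_set', List.length_set]
    split_ifs <;> omega
  unfold moment
  rw [hlen]
  have hj1 : j + 1 ∈ Finset.range l.length := Finset.mem_range.2 hj
  have hjmem : j ∈ (Finset.range l.length).erase (j + 1) :=
    Finset.mem_erase.2 ⟨by omega, Finset.mem_range.2 hjl⟩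
  rw [← Finset.add_sum_erase _ _ hj1, ← Finset.add_sum_erase _ _ hjmem,
    ← Finset.add_sum_erase _ (fun i => i * l.getD i 0) hj1,
    ← Finset.add_sum_erase _ (fun i => i * l.getD i 0) hjmem]
  have hrest : ∑ i ∈ ((Finset.range l.length).erase (j + 1)).erase j,
      i * (applyMove l j).getD i 0 =
      ∑ i ∈ ((Finset.range l.length).erase (j + 1)).erase j, i * l.getD i 0 := by
    refine Finset.sum_congr rfl fun i hi => ?_
    simp only [Finset.mem_erase] at hi
    rw [hget]
    simp [hi.1, hi.2.1]
  have e1 : (applyMove l j).getD (j + 1) 0 = l.getD j 0 + 1 := by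
    rw [hget]; simp
  have e2 : (applyMove l j).getD j 0 = l.getD (j + 1) 0 - 1 := by
    rw [hget]; simp [show j ≠ j + 1 by omega]
  rw [hrest, e1, e2]
  have hfin : ∀ a b : ℕ, a + 2 ≤ b →
      (j + 1) * (a + 1) + j * (b - 1) < (j + 1) * b + j * a := by
    intro a b hab'
    obtain ⟨c, rfl⟩ : ∃ c, b = a + 2 + c := ⟨b - a - 2, by omega⟩
    have h1 : a + 2 + c - 1 = a + 1 + c := by omega
    rw [h1]
    nlinarith
  have := hfin _ _ hab
  omega

lemma nodup_two_mem_length {l : List ℕ} (hnd : l.Nodup) {a b : ℕ}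
    (ha : a ∈ l) (hb : b ∈ l) (hab : a ≠ b) : 2 ≤ l.length := by
  have hb' : b ∈ l.erase a := (List.mem_erase_of_ne (fun h => hab h.symm)).2 hb
  have h1 : 1 ≤ (l.erase a).length := List.length_pos_iff.2 (List.ne_nil_of_mem hb')
  have h2 : (l.erase a).length = l.length - 1 := List.length_erase_of_mem ha
  have h3 : 1 ≤ l.length := List.length_pos_iff.2 (List.ne_nil_of_mem ha)
  omega

/-- For a pre-diagram: (1) at most one move is applicable, and (2) the wrapping process
terminates, i.e. there is no infinite sequence of moves starting from it. -/
theorem preDiagram_unique_move_and_terminates (l : List ℕ) (hl : IsPreDiagram l) :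
    (∀ j₁ j₂ : ℕ, MoveApplicable l j₁ → MoveApplicable l j₂ → j₁ = j₂) ∧
    ¬ ∃ f : ℕ → List ℕ, f 0 = l ∧ ∀ s : ℕ, MoveRel (f s) (f (s + 1)) := by
  constructor
  · intro j₁ j₂ h1 h2
    by_contra hne
    have hcnt := hl.2
    set p : ℕ → Bool := fun i => decide (l.getD i 0 < l.getD (i + 1) 0) with hp
    have hmem : ∀ j, MoveApplicable l j → j ∈ (List.range (l.length - 1)).filter p := by
      intro j ⟨hjl, hjle⟩
      rw [List.mem_filter]
      refine ⟨List.mem_range.2 (by omega), ?_⟩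
      simp only [hp, decide_eq_true_eq]
      omega
    have hnd : ((List.range (l.length - 1)).filter p).Nodup :=
      List.nodup_range.filter _
    have h2le : 2 ≤ ((List.range (l.length - 1)).filter p).length :=
      nodup_two_mem_length hnd (hmem j₁ h1) (hmem j₂ h2) hne
    rw [List.countP_eq_length_filter] at hcnt
    omega
  · rintro ⟨f, -, hf⟩
    have key : ∀ s, moment (f s) + s ≤ moment (f 0) := by
      intro s
      induction s with
      | zero => omega
      | succ n ih =>
        have := moment_decreases (hf n)
        omega
    have := key (moment (f 0) + 1)
    omega
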